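/- Let X, Y, Z be metric spaces and let r, r' ≥ 0 be real numbers. If the quasi-isometric distance satisfies d̂(X,Y) ≤ r and d̂(Y,Z) ≤ r', then d̂(X,Z) ≤ 2·(r + r' + r·r'). -/
import Mathlib


open ENNReal

/-- `f` is an `(A,B)`-quasi-isometric embedding. -/
def QIEmb {X Y : Type*} [MetricSpace X] [MetricSpace Y] (A B : ℝ) (f : X → Y) : Prop :=
  ∀ x x' : X, (1 / A) * dist x x' - B ≤ dist (f x) (f x') ∧
    dist (f x) (f x') ≤ A * dist x x' + B

/-- `X` and `Y` are `(A,B,C)`-quasi-isometric. -/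
def QuasiIsometric (X Y : Type*) [MetricSpace X] [MetricSpace Y] (A B C : ℝ) : Prop :=
  ∃ (f : X → Y) (g : Y → X), QIEmb A B f ∧ QIEmb A B g ∧
    (∀ x : X, dist (g (f x)) x ≤ C) ∧ (∀ y : Y, dist (f (g y)) y ≤ C)

/-- The quasi-isometric distance `d̂`. -/
noncomputable def qiDist (X Y : Type*) [MetricSpace X] [MetricSpace Y] : ℝ≥0∞ :=
  sInf {e : ℝ≥0∞ | ∃ r : ℝ, 0 < r ∧ e = ENNReal.ofReal r ∧ QuasiIsometric X Y (1 + r) r r}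

private lemma qiemb_comp {X Y Z : Type*} [MetricSpace X] [MetricSpace Y] [MetricSpace Z]
    {s s' : ℝ} (hs : 0 < s) (hs' : 0 < s') {f : X → Y} {f' : Y → Z}
    (hf : QIEmb (1 + s) s f) (hf' : QIEmb (1 + s') s' f') :
    QIEmb (1 + 2 * (s + s' + s * s')) (2 * (s + s' + s * s')) (f' ∘ f) := by
  intro x x'
  set t := 2 * (s + s' + s * s') with ht
  have hts : (0:ℝ) < 1 + t := by positivity
  have h1s : (0:ℝ) < 1 + s := by positivity
  have h1s' : (0:ℝ) < 1 + s' := by positivity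
  have hd : (0:ℝ) ≤ dist x x' := dist_nonneg
  have hlow := (hf x x').1
  have hhigh := (hf x x').2
  have hlow' := (hf' (f x) (f x')).1
  have hhigh' := (hf' (f x) (f x')).2
  rw [sub_le_iff_le_add, one_div, inv_mul_le_iff₀ h1s] at hlow
  rw [sub_le_iff_le_add, one_div, inv_mul_le_iff₀ h1s'] at hlow'
  constructor
  · rw [sub_le_iff_le_add, one_div, inv_mul_le_iff₀ hts]
    simp only [Function.comp_apply]
    nlinarith [hlow, hlow', dist_nonneg (x := f x) (y := f x'),
      dist_nonneg (x := f' (f x)) (y := f' (f x')), mul_pos hs hs', sq_nonneg (s + s')]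
  · simp only [Function.comp_apply]
    nlinarith [hhigh, hhigh', dist_nonneg (x := f x) (y := f x'), hd,
      mul_pos hs hs', sq_nonneg (s + s')]

private lemma qi_comp {X Y Z : Type*} [MetricSpace X] [MetricSpace Y] [MetricSpace Z]
    {s s' : ℝ} (hs : 0 < s) (hs' : 0 < s')
    (h1 : QuasiIsometric X Y (1 + s) s s) (h2 : QuasiIsometric Y Z (1 + s') s' s') :
    QuasiIsometric X Z (1 + 2 * (s + s' + s * s')) (2 * (s + s' + s * s'))
      (2 * (s + s' + s * s')) := by
  obtain ⟨f, g, hf, hg, hgf, hfg⟩ := h1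
  obtain ⟨f', g', hf', hg', hgf', hfg'⟩ := h2
  refine ⟨f' ∘ f, g ∘ g', qiemb_comp hs hs' hf hf', ?_, ?_, ?_⟩
  · have := qiemb_comp hs' hs hg' hg
    have heq : 2 * (s' + s + s' * s) = 2 * (s + s' + s * s') := by ring
    rwa [heq] at this
  · intro x
    have h1 : dist (g (g' (f' (f x)))) (g (f x)) ≤ (1 + s) * dist (g' (f' (f x))) (f x) + s :=
      (hg _ _).2
    have h2 : dist (g' (f' (f x))) (f x) ≤ s' := hgf' (f x)
    have h3 : dist (g (f x)) x ≤ s := hgf x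
    calc dist ((g ∘ g') ((f' ∘ f) x)) x
        ≤ dist (g (g' (f' (f x)))) (g (f x)) + dist (g (f x)) x := dist_triangle _ _ _
      _ ≤ (1 + s) * s' + s + s := by
          have : dist (g (g' (f' (f x)))) (g (f x)) ≤ (1 + s) * s' + s := by nlinarith
          linarith
      _ ≤ 2 * (s + s' + s * s') := by nlinarith
  · intro z
    have h1 : dist (f' (f (g (g' z)))) (f' (g' z)) ≤ (1 + s') * dist (f (g (g' z))) (g' z) + s' :=
      (hf' _ _).2
    have h2 : dist (f (g (g' z))) (g' z) ≤ s := hfg (g' z)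
    have h3 : dist (f' (g' z)) z ≤ s' := hfg' z
    calc dist ((f' ∘ f) ((g ∘ g') z)) z
        ≤ dist (f' (f (g (g' z)))) (f' (g' z)) + dist (f' (g' z)) z := dist_triangle _ _ _
      _ ≤ (1 + s') * s + s' + s' := by
          have : dist (f' (f (g (g' z)))) (f' (g' z)) ≤ (1 + s') * s + s' := by nlinarith
          linarith
      _ ≤ 2 * (s + s' + s * s') := by nlinarith

/-- Generalized triangle inequality for the quasi-isometric distance. -/
theorem qiDist_generalized_triangle
    (X Y Z : Type*) [MetricSpace X] [MetricSpace Y] [MetricSpace Z]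
    (r r' : ℝ) (hr : 0 ≤ r) (hr' : 0 ≤ r')
    (hXY : qiDist X Y ≤ ENNReal.ofReal r) (hYZ : qiDist Y Z ≤ ENNReal.ofReal r') :
    qiDist X Z ≤ ENNReal.ofReal (2 * (r + r' + r * r')) := by
  apply ENNReal.le_of_forall_pos_le_add
  intro ε hε _
  have hεR : (0:ℝ) < (ε:ℝ) := hε
  set δ : ℝ := min 1 ((ε:ℝ) / (2 * (3 + r + r'))) with hδ
  have hden : (0:ℝ) < 2 * (3 + r + r') := by positivity
  have hδpos : 0 < δ := lt_min one_pos (by positivity)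
  have hδ1 : δ ≤ 1 := min_le_left _ _
  have hδε : δ * (2 * (3 + r + r')) ≤ (ε:ℝ) := by
    have := min_le_right 1 ((ε:ℝ) / (2 * (3 + r + r')))
    calc δ * (2 * (3 + r + r')) ≤ ((ε:ℝ) / (2 * (3 + r + r'))) * (2 * (3 + r + r')) := by
          exact mul_le_mul_of_nonneg_right this hden.le
      _ = (ε:ℝ) := div_mul_cancel₀ _ hden.ne'
  have hXY' : qiDist X Y < ENNReal.ofReal (r + δ) :=
    lt_of_le_of_lt hXY (ENNReal.ofReal_lt_ofReal_iff (by linarith) |>.2 (by linarith))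
  have hYZ' : qiDist Y Z < ENNReal.ofReal (r' + δ) :=
    lt_of_le_of_lt hYZ (ENNReal.ofReal_lt_ofReal_iff (by linarith) |>.2 (by linarith))
  rw [qiDist, sInf_lt_iff] at hXY' hYZ'
  obtain ⟨e, ⟨s, hs, rfl, hQ1⟩, hes⟩ := hXY'
  obtain ⟨e', ⟨s', hs', rfl, hQ2⟩, hes'⟩ := hYZ'
  have hsr : s < r + δ := by
    rwa [ENNReal.ofReal_lt_ofReal_iff (by linarith)] at hes
  have hsr' : s' < r' + δ := by
    rwa [ENNReal.ofReal_lt_ofReal_iff (by linarith)] at hes'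
  have hcomp := qi_comp hs hs' hQ1 hQ2
  have hmem : ENNReal.ofReal (2 * (s + s' + s * s')) ∈
      {e : ℝ≥0∞ | ∃ u : ℝ, 0 < u ∧ e = ENNReal.ofReal u ∧ QuasiIsometric X Z (1 + u) u u} :=
    ⟨2 * (s + s' + s * s'), by positivity, rfl, hcomp⟩
  have hle : qiDist X Z ≤ ENNReal.ofReal (2 * (s + s' + s * s')) := sInf_le hmem
  refine hle.trans ?_
  have hreal : 2 * (s + s' + s * s') ≤ 2 * (r + r' + r * r') + (ε:ℝ) := by
    nlinarith [mul_pos hs hs', hδpos, hδ1, hδε, hsr, hsr']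
  calc ENNReal.ofReal (2 * (s + s' + s * s'))
      ≤ ENNReal.ofReal (2 * (r + r' + r * r') + (ε:ℝ)) := ENNReal.ofReal_le_ofReal hreal
    _ = ENNReal.ofReal (2 * (r + r' + r * r')) + ENNReal.ofReal (ε:ℝ) :=
        ENNReal.ofReal_add (by positivity) hεR.le
    _ = ENNReal.ofReal (2 * (r + r' + r * r')) + (ε : ℝ≥0∞) := by
        rw [ENNReal.ofReal_coe_nnreal]
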